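/- Let V be a finite-dimensional real vector space, ω a symplectic form on V, and A : V → V a linear map such that the bilinear form (x, y) ↦ ω(x, Ay) is symmetric and positive definite. Then det A > 0. -/

import Mathlib

open Matrix Polynomial Filter

theorem eval_det_aux {n : Type*} [Fintype n] [DecidableEq n] {R : Type*} [CommRing R]
    (M : Matrix n n R[X]) (r : R) :
    Polynomial.eval r M.det = (Polynomial.eval (scalar n r) (matPolyEquiv M)).det := by
  rw [Polynomial.eval, ← coe_eval₂RingHom, RingHom.map_det]
  exact congr_arg det <| ext fun _ _ ↦ matPolyEquiv_eval _ _ _ _ |>.symm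

/-- An invertible real skew-symmetric matrix has positive determinant. -/
lemma skew_det_pos {n : Type*} [Fintype n] [DecidableEq n] (S : Matrix n n ℝ)
    (hskew : Sᵀ = -S) (hdet : S.det ≠ 0) : 0 < S.det := by
  rcases isEmpty_or_nonempty n with h | h
  · simp [Matrix.det_isEmpty]
  -- the function `f t = det (S + t • 1)`
  set f : ℝ → ℝ := fun t => (S + t • (1 : Matrix n n ℝ)).det with hf
  have hcont : Continuous f := by
    apply Continuous.matrix_det
    fun_prop
  -- `f t ≠ 0` for `t ≥ 0`
  have hne : ∀ t : ℝ, 0 ≤ t → f t ≠ 0 := by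
    intro t ht h0
    rcases eq_or_lt_of_le ht with rfl | htpos
    · simp only [hf, zero_smul, add_zero] at h0
      exact hdet h0
    · obtain ⟨v, hv, hveq⟩ := (Matrix.exists_mulVec_eq_zero_iff).2 h0
      have hdot : v ⬝ᵥ ((S + t • 1) *ᵥ v) = 0 := by rw [hveq, dotProduct_zero]
      have hS0 : v ⬝ᵥ (S *ᵥ v) = 0 := by
        have h1 : v ⬝ᵥ (S *ᵥ v) = (Sᵀ *ᵥ v) ⬝ᵥ v := by
          rw [Matrix.dotProduct_mulVec, Matrix.mulVec_transpose]
        rw [hskew] at h1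
        have h2 : (((-S) *ᵥ v) ⬝ᵥ v) = -(v ⬝ᵥ (S *ᵥ v)) := by
          rw [Matrix.neg_mulVec, neg_dotProduct, dotProduct_comm]
        rw [h2] at h1
        linarith
      have hvv : 0 < v ⬝ᵥ v := by
        have hne0 : v ⬝ᵥ v ≠ 0 := fun h => hv (dotProduct_self_eq_zero.mp h)
        have hnn : 0 ≤ v ⬝ᵥ v :=
          Finset.sum_nonneg fun i _ => mul_self_nonneg (v i)
        exact lt_of_le_of_ne hnn (Ne.symm hne0)
      rw [Matrix.add_mulVec, dotProduct_add, hS0, zero_add, Matrix.smul_mulVec,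
        Matrix.one_mulVec, dotProduct_smul, smul_eq_mul] at hdot
      nlinarith
  -- `f t = eval t ((-S).charpoly)`
  have heval : ∀ t : ℝ, ((-S).charpoly).eval t = f t := by
    intro t
    rw [Matrix.charpoly, eval_det_aux, matPolyEquiv_charmatrix]
    simp only [eval_sub, eval_X, eval_C, hf]
    congr 1
    ext i j
    simp [Matrix.scalar_apply, Matrix.diagonal, Matrix.one_apply, add_comm]
  -- `f` tends to infinity
  have htop : Tendsto f atTop atTop := by
    have hmono := ((-S).charpoly_monic)
    have hdeg : 0 < ((-S).charpoly).degree := by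
      rw [Matrix.charpoly_degree_eq_dim]
      exact_mod_cast Fintype.card_pos
    have := Polynomial.tendsto_atTop_of_leadingCoeff_nonneg ((-S).charpoly) hdeg
      (by rw [hmono.leadingCoeff]; norm_num)
    refine this.congr fun t => heval t
  -- pick `t₀ ≥ 0` with `f t₀ > 0`
  obtain ⟨t₀, ht₀⟩ := ((htop.eventually_gt_atTop 0).and (eventually_ge_atTop (0 : ℝ))).exists
  -- IVT
  by_contra hle
  push_neg at hle
  have hf0 : f 0 < 0 := by
    simp only [hf, zero_smul, add_zero]
    exact lt_of_le_of_ne hle hdet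
  have := intermediate_value_Icc ht₀.2 hcont.continuousOn
  have h0mem : (0 : ℝ) ∈ Set.Icc (f 0) (f t₀) := ⟨le_of_lt hf0, le_of_lt ht₀.1⟩
  obtain ⟨c, hc, hceq⟩ := this h0mem
  exact hne c hc.1 hceq

/-- Let `V` be a finite-dimensional real vector space, `ω` a symplectic form on
`V` (nondegenerate alternating bilinear form), and `A : V → V` a linear map such that the bilinear
form `(x, y) ↦ ω(x, Ay)` is symmetric and positive definite.  Then `det A > 0`. -/
theorem det_pos_of_symplectic_symm_posdef
    {V : Type*} [AddCommGroup V] [Module ℝ V] [FiniteDimensional ℝ V]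
    (ω : LinearMap.BilinForm ℝ V)
    (halt : ∀ x : V, ω x x = 0)
    (hnondeg : ∀ x : V, (∀ y : V, ω x y = 0) → x = 0)
    (A : V →ₗ[ℝ] V)
    (hsymm : ∀ x y : V, ω x (A y) = ω y (A x))
    (hpos : ∀ x : V, x ≠ 0 → 0 < ω x (A x)) :
    0 < LinearMap.det A := by
  classical
  have hskew : ∀ x y : V, ω x y = -ω y x := by
    intro x y
    have h := halt (x + y)
    simp only [map_add, LinearMap.add_apply] at h
    rw [halt x, halt y] at h
    linarith
  set b := Module.finBasis ℝ V with hb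
  set Ω := LinearMap.BilinForm.toMatrix b ω with hΩ
  set M := LinearMap.toMatrix b b A with hM
  -- the matrix of the positive-definite form
  have hcomp : LinearMap.BilinForm.toMatrix b (ω.compRight A) = Ω * M :=
    LinearMap.BilinForm.toMatrix_compRight b ω A
  -- `Ω * M` is positive definite
  have hbilin : ∀ x : Fin (Module.finrank ℝ V) → ℝ,
      x ⬝ᵥ ((Ω * M) *ᵥ x) = ω (b.equivFun.symm x) (A (b.equivFun.symm x)) := by
    intro x
    have h1 := Matrix.toBilin_apply b (LinearMap.BilinForm.toMatrix b (ω.compRight A))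
      (b.equivFun.symm x) (b.equivFun.symm x)
    rw [Matrix.toBilin_toMatrix, hcomp] at h1
    have hrepr : ∀ i, b.repr (b.equivFun.symm x) i = x i := by
      intro i; rw [← Module.Basis.equivFun_apply, LinearEquiv.apply_symm_apply]
    simp only [hrepr] at h1
    have h2 : x ⬝ᵥ ((Ω * M) *ᵥ x) = ∑ i, ∑ j, x i * (Ω * M) i j * x j := by
      simp [dotProduct, Matrix.mulVec, Finset.mul_sum, mul_assoc]
    rw [h2, ← h1]
    rfl
  have hPposdef : (Ω * M).PosDef := by
    refine Matrix.PosDef.of_dotProduct_mulVec_pos ?_ ?_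
    · ext i j
      have hij : (Ω * M) i j = ω (b i) (A (b j)) := by
        rw [← hcomp, LinearMap.BilinForm.toMatrix_apply]
        rfl
      have hji : (Ω * M) j i = ω (b j) (A (b i)) := by
        rw [← hcomp, LinearMap.BilinForm.toMatrix_apply]
        rfl
      simp only [Matrix.conjTranspose_apply, star_trivial, hij, hji]
      exact hsymm (b j) (b i)
    · intro x hx
      rw [star_trivial, hbilin x]
      apply hpos
      intro h0
      apply hx
      rw [← LinearEquiv.apply_symm_apply b.equivFun x, h0, map_zero]
  -- `Ω` is skew-symmetric and invertible
  have hΩskew : Ωᵀ = -Ω := by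
    ext i j
    simp only [Matrix.transpose_apply, Matrix.neg_apply, hΩ, LinearMap.BilinForm.toMatrix_apply]
    exact hskew (b j) (b i)
  have hΩdet : Ω.det ≠ 0 := by
    intro h0
    obtain ⟨v, hv, hveq⟩ := (Matrix.exists_mulVec_eq_zero_iff).2 h0
    set w := b.equivFun.symm v with hw
    have hwne : w ≠ 0 := by
      intro h; apply hv
      rw [← LinearEquiv.apply_symm_apply b.equivFun v, ← hw, h, map_zero]
    apply hwne
    apply hnondeg
    intro y
    rw [hskew w y]
    have hωy : ∀ i, ω (b i) w = 0 := by
      intro i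
      have := congrFun hveq i
      simp only [Matrix.mulVec, dotProduct, hΩ, LinearMap.BilinForm.toMatrix_apply] at this
      rw [hw, Module.Basis.equivFun_symm_apply, map_sum]
      simpa [mul_comm] using this
    have hy : y = ∑ i, b.repr y i • b i := (b.sum_repr y).symm
    rw [hy, map_sum]
    simp only [LinearMap.sum_apply, LinearMap.smul_apply, smul_eq_mul]
    rw [Finset.sum_congr rfl (fun i _ => by rw [LinearMap.map_smul])]
    simp only [LinearMap.smul_apply, hωy, smul_eq_mul, mul_zero, Finset.sum_const_zero, neg_zero]
  have hΩpos : 0 < Ω.det := skew_det_pos Ω hΩskew hΩdet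
  have hPdet : 0 < (Ω * M).det := hPposdef.det_pos
  rw [Matrix.det_mul] at hPdet
  have hdetA : LinearMap.det A = M.det := (LinearMap.det_toMatrix b A).symm
  rw [hdetA]
  nlinarith
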